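/- There exists a bivariate function F(w,v) = 1 − (2 − w − w^{-1})(2 − v − v^{-1})/16 on the unit torus {|w| = |v| = 1} with |F(w,v)| ≤ 1 everywhere, |F(w,v)| = 1 whenever w = 1 or v = 1, that cannot be written as F(w,v) = Σ_j p_j(w) q_j(v) for Laurent polynomials p_j, q_j with Σ_j |p_j(w)|² ≤ 1 and Σ_j |q_j(v)|² ≤ 1 for all |w| = |v| = 1. -/

import Mathlib

open Complex

noncomputable def Fcounter (w v : ℂ) : ℂ :=
  1 - (2 - w - w⁻¹) * (2 - v - v⁻¹) / 16

lemma two_sub_conj (z : ℂ) : 2 - z - (starRingEnd ℂ) z = ((2 - 2 * z.re : ℝ) : ℂ) := by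
  rw [sub_sub, Complex.add_conj]
  push_cast
  ring

lemma Fcounter_real (w v : ℂ) (hw : ‖w‖ = 1) (hv : ‖v‖ = 1) :
    Fcounter w v = ((1 - (2 - 2 * w.re) * (2 - 2 * v.re) / 16 : ℝ) : ℂ) := by
  rw [Fcounter, Complex.inv_eq_conj hw, Complex.inv_eq_conj hv, two_sub_conj, two_sub_conj]
  push_cast
  ring

lemma key {n : ℕ} (a b : Fin n → ℂ) (ha : ∑ j, ‖a j‖ ^ 2 ≤ 1)
    (hb : ∑ j, ‖b j‖ ^ 2 ≤ 1) (hab : ∑ j, a j * b j = 1) :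
    ∀ j, a j = (starRingEnd ℂ) (b j) / ((∑ i, ‖b i‖ ^ 2 : ℝ) : ℂ) := by
  set s : ℝ := ∑ i, ‖b i‖ ^ 2 with hs
  have hs0 : 0 ≤ s := Finset.sum_nonneg fun i _ => by positivity
  have hspos : 0 < s := by
    rcases lt_or_eq_of_le hs0 with h | h
    · exact h
    · exfalso
      have hz : ∀ i ∈ Finset.univ, ‖b i‖ ^ 2 = 0 := by
        intro i _
        have := (Finset.sum_eq_zero_iff_of_nonneg (fun i _ => by positivity)).mp h.symm
        exact this i (Finset.mem_univ i)
      have : (∑ j, a j * b j) = 0 := Finset.sum_eq_zero fun i _ => by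
        have := hz i (Finset.mem_univ i)
        have hb0 : b i = 0 := by
          have : ‖b i‖ = 0 := by nlinarith [norm_nonneg (b i)]
          exact norm_eq_zero.mp this
        simp [hb0]
      rw [hab] at this
      exact one_ne_zero this
  -- show sum of |a j - conj (b j)/s|^2 ≤ 0
  have hterm : ∀ j, ‖a j - (starRingEnd ℂ) (b j) / (s : ℂ)‖ ^ 2
      = ‖a j‖ ^ 2 - 2 * (a j * b j).re / s + ‖b j‖ ^ 2 / s ^ 2 := by
    intro j
    rw [Complex.sq_norm, Complex.sq_norm, Complex.sq_norm]
    have hsne : (s : ℂ) ≠ 0 := by exact_mod_cast ne_of_gt hspos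
    rw [Complex.normSq_sub]
    have h1 : Complex.normSq ((starRingEnd ℂ) (b j) / (s : ℂ)) = Complex.normSq (b j) / s ^ 2 := by
      rw [Complex.normSq_div, Complex.normSq_conj]
      simp [Complex.normSq_ofReal]
      ring
    have h2 : (a j * (starRingEnd ℂ) ((starRingEnd ℂ) (b j) / (s : ℂ))).re
        = (a j * b j).re / s := by
      rw [map_div₀, Complex.conj_conj]
      have hcs : (starRingEnd ℂ) ((s : ℝ) : ℂ) = ((s : ℝ) : ℂ) := Complex.conj_ofReal s
      rw [hcs, show a j * (b j / ((s:ℝ):ℂ)) = (a j * b j) / ((s:ℝ):ℂ) by ring,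
        Complex.div_ofReal_re]
    rw [h1, h2]
    ring
  have hsum : ∑ j, ‖a j - (starRingEnd ℂ) (b j) / (s : ℂ)‖ ^ 2 ≤ 0 := by
    have hre : ∑ j, (a j * b j).re = 1 := by
      have := congrArg Complex.re hab
      rw [Complex.re_sum] at this
      simpa using this
    calc ∑ j, ‖a j - (starRingEnd ℂ) (b j) / (s : ℂ)‖ ^ 2
        = ∑ j, (‖a j‖ ^ 2 - 2 * (a j * b j).re / s + ‖b j‖ ^ 2 / s ^ 2) := by
          exact Finset.sum_congr rfl fun j _ => hterm j
      _ = (∑ j, ‖a j‖ ^ 2) - 2 * (∑ j, (a j * b j).re) / s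
            + (∑ j, ‖b j‖ ^ 2) / s ^ 2 := by
          rw [Finset.sum_add_distrib, Finset.sum_sub_distrib, ← Finset.sum_div,
            ← Finset.sum_div, ← Finset.mul_sum]
      _ ≤ 1 - 2 / s + 1 / s := by
          rw [hre, ← hs]
          have h1s : 1 ≤ 1 / s := by
            rw [le_div_iff₀ hspos]; linarith
          have hss : s / s ^ 2 = 1 / s := by rw [sq]; field_simp
          have h2s : 2 / s = 2 * (1 / s) := by ring
          rw [hss]
          linarith
      _ ≤ 0 := by
          have h1s : 1 ≤ 1 / s := by rw [le_div_iff₀ hspos]; linarith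
          have h2s : 2 / s = 2 * (1 / s) := by ring
          linarith
  intro j
  have hj : ‖a j - (starRingEnd ℂ) (b j) / (s : ℂ)‖ ^ 2 = 0 := by
    have hnn : ∀ i ∈ Finset.univ, (0:ℝ) ≤ ‖a i - (starRingEnd ℂ) (b i) / (s : ℂ)‖ ^ 2 :=
      fun i _ => by positivity
    have := (Finset.sum_eq_zero_iff_of_nonneg hnn).mp (le_antisymm hsum (Finset.sum_nonneg hnn))
    exact this j (Finset.mem_univ j)
  have : a j - (starRingEnd ℂ) (b j) / (s : ℂ) = 0 := by
    have : ‖a j - (starRingEnd ℂ) (b j) / (s : ℂ)‖ = 0 := by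
      nlinarith [norm_nonneg (a j - (starRingEnd ℂ) (b j) / (s : ℂ))]
    exact norm_eq_zero.mp this
  exact sub_eq_zero.mp this

theorem stmt_11 :
    (∀ w v : ℂ, ‖w‖ = 1 → ‖v‖ = 1 → ‖Fcounter w v‖ ≤ 1) ∧
    (∀ w v : ℂ, ‖w‖ = 1 → ‖v‖ = 1 → (w = 1 ∨ v = 1) →
      ‖Fcounter w v‖ = 1) ∧
    ¬ ∃ (n : ℕ) (p q : Fin n → ℂ → ℂ),
        (∀ j, ∃ (d : ℕ) (c : ℤ → ℂ), ∀ z : ℂ, z ≠ 0 →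
          p j z = ∑ s ∈ Finset.Icc (-(d : ℤ)) (d : ℤ), c s * z ^ s) ∧
        (∀ j, ∃ (d : ℕ) (c : ℤ → ℂ), ∀ z : ℂ, z ≠ 0 →
          q j z = ∑ s ∈ Finset.Icc (-(d : ℤ)) (d : ℤ), c s * z ^ s) ∧
        (∀ w : ℂ, ‖w‖ = 1 → ∑ j, ‖p j w‖ ^ 2 ≤ 1) ∧
        (∀ v : ℂ, ‖v‖ = 1 → ∑ j, ‖q j v‖ ^ 2 ≤ 1) ∧
        (∀ w v : ℂ, ‖w‖ = 1 → ‖v‖ = 1 →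
          Fcounter w v = ∑ j, p j w * q j v) := by
  have habs1 : ‖(1 : ℂ)‖ = 1 := by simp
  have habsm1 : ‖(-1 : ℂ)‖ = 1 := by simp
  refine ⟨?_, ?_, ?_⟩
  · intro w v hw hv
    rw [Fcounter_real w v hw hv, Complex.norm_real, Real.norm_eq_abs]
    have hw' : |w.re| ≤ 1 := by rw [← hw]; exact Complex.abs_re_le_norm w
    have hv' : |v.re| ≤ 1 := by rw [← hv]; exact Complex.abs_re_le_norm v
    rw [abs_le] at hw' hv' ⊢
    constructor <;> nlinarith [hw'.1, hw'.2, hv'.1, hv'.2]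
  · intro w v hw hv h
    rcases h with h | h
    · subst h
      rw [Fcounter_real 1 v habs1 hv]
      simp
    · subst h
      rw [Fcounter_real w 1 hw habs1]
      simp
  · rintro ⟨n, p, q, -, -, hp, hq, hF⟩
    have hF1 : ∀ w : ℂ, ‖w‖ = 1 → ∑ j, p j w * q j 1 = 1 := by
      intro w hw
      have := hF w 1 hw habs1
      rw [Fcounter_real w 1 hw habs1] at this
      simpa using this.symm
    set s : ℝ := ∑ i, ‖q i 1‖ ^ 2 with hs
    have h1 := key (fun j => p j 1) (fun j => q j 1) (hp 1 habs1) (hq 1 habs1) (hF1 1 habs1)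
    have h2 := key (fun j => p j (-1)) (fun j => q j 1) (hp (-1) habsm1) (hq 1 habs1)
      (hF1 (-1) habsm1)
    have hpeq : ∀ j, p j 1 = p j (-1) := fun j => by simpa using (h1 j).trans (h2 j).symm
    have hc : Fcounter (-1) (-1) = Fcounter 1 (-1) := by
      rw [hF (-1) (-1) habsm1 habsm1, hF 1 (-1) habs1 habsm1]
      exact Finset.sum_congr rfl fun j _ => by rw [hpeq j]
    rw [show Fcounter (-1) (-1) = 0 by norm_num [Fcounter],
        show Fcounter 1 (-1) = 1 by norm_num [Fcounter]] at hc
    exact one_ne_zero hc.symm
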